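/- Consider a directed graph on the node set {1,…,N} with edge set E; for each node i let 𝐕ᵢ = {j : (j,i) ∈ E} denote the in-neighbours and qᵢ = #{j : (i,j) ∈ E} the out-degree of i. Let V₁,…,V_N : ℝ → ℝ be continuously differentiable with Vᵢ(t) ≥ 0 for all t ≥ 0, let g₁,…,g_N, w₁,…,w_N : [0,∞) → ℝ be continuous, let γ ∈ ℝ, and let α₁,…,α_N > 0, π₁,…,π_N > 0 satisfy qᵢπᵢ < 2αᵢ for every i. Suppose that for every i and every t ≥ 0, Vᵢ′(t) + 2αᵢVᵢ(t) + gᵢ(t) ≤ Σ_{j∈𝐕ᵢ} πⱼVⱼ(t) + γ²wᵢ(t). Then, with ρ = min_{1≤i≤N}(2αᵢ − qᵢπᵢ) > 0, for every T > 0 one has ∫₀ᵀ Σ_{i=1}^N ( gᵢ(t) + ρ Vᵢ(t) ) dt ≤ Σ_{i=1}^N Vᵢ(0) + γ² ∫₀ᵀ Σ_{i=1}^N wᵢ(t) dt. -/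

import Mathlib

open Finset

/-- The in-neighbourhood `𝐕ᵢ = {j : (j,i) ∈ E}` of node `i` in a digraph with edge set `E`. -/
def inNbrs {N : ℕ} (E : Finset (Fin N × Fin N)) (i : Fin N) : Finset (Fin N) :=
  Finset.univ.filter (fun j => (j, i) ∈ E)

/-- The out-degree `qᵢ = #{j : (i,j) ∈ E}` of node `i` in a digraph with edge set `E`. -/
def outDeg {N : ℕ} (E : Finset (Fin N × Fin N)) (i : Fin N) : ℕ :=
  (Finset.univ.filter (fun j => (i, j) ∈ E)).card

theorem stmt_7 {N : ℕ} (hN : 0 < N) (E : Finset (Fin N × Fin N))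
    (V g w : Fin N → ℝ → ℝ) (γ : ℝ) (α π : Fin N → ℝ)
    (hVsmooth : ∀ i, ContDiff ℝ 1 (V i))
    (hVnonneg : ∀ i t, 0 ≤ t → 0 ≤ V i t)
    (hg : ∀ i, ContinuousOn (g i) (Set.Ici 0))
    (hw : ∀ i, ContinuousOn (w i) (Set.Ici 0))
    (hα : ∀ i, 0 < α i) (hπ : ∀ i, 0 < π i)
    (hqπ : ∀ i, (outDeg E i : ℝ) * π i < 2 * α i)
    (hdiss : ∀ i, ∀ t : ℝ, 0 ≤ t → deriv (V i) t + 2 * α i * V i t + g i t ≤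
        (∑ j ∈ inNbrs E i, π j * V j t) + γ ^ 2 * w i t)
    (ρ : ℝ)
    (hρ : ρ = Finset.univ.inf' ⟨⟨0, hN⟩, Finset.mem_univ _⟩
        (fun i => 2 * α i - (outDeg E i : ℝ) * π i)) :
    (0 < ρ) ∧
      ∀ T : ℝ, 0 < T →
        (∫ t in (0:ℝ)..T, ∑ i, (g i t + ρ * V i t)) ≤
          (∑ i, V i 0) + γ ^ 2 * ∫ t in (0:ℝ)..T, ∑ i, w i t := by
  have hρpos : 0 < ρ := by
    rw [hρ]; refine (Finset.lt_inf'_iff _).2 ?_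
    intro i _
    linarith [hqπ i]
  have hρle : ∀ i : Fin N, ρ ≤ 2 * α i - (outDeg E i : ℝ) * π i := by
    intro i
    rw [hρ]
    exact Finset.inf'_le _ (Finset.mem_univ i)
  -- swap double sum
  have key : ∀ t : ℝ, ∑ i, ∑ j ∈ inNbrs E i, π j * V j t
      = ∑ j, (outDeg E j : ℝ) * (π j * V j t) := by
    intro t
    simp only [inNbrs, Finset.sum_filter]
    rw [Finset.sum_comm]
    refine Finset.sum_congr rfl fun j _ => ?_
    rw [← Finset.sum_filter, Finset.sum_const, outDeg, nsmul_eq_mul]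
  have hVdiff : ∀ i, Differentiable ℝ (V i) := fun i =>
    (hVsmooth i).differentiable one_ne_zero
  have hVcont : ∀ i, Continuous (V i) := fun i => (hVsmooth i).continuous
  have hDcont : ∀ i, Continuous (deriv (V i)) := fun i =>
    (hVsmooth i).continuous_deriv le_rfl
  -- the total storage function
  set F : ℝ → ℝ := fun t => ∑ i, V i t with hF
  have hFderiv : ∀ t : ℝ, deriv F t = ∑ i, deriv (V i) t := by
    intro t
    rw [hF]
    exact deriv_fun_sum (fun i _ => (hVdiff i).differentiableAt)
  -- pointwise inequality
  have hpt : ∀ t : ℝ, 0 ≤ t →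
      ∑ i, (g i t + ρ * V i t) ≤ -(∑ i, deriv (V i) t) + γ ^ 2 * ∑ i, w i t := by
    intro t ht
    have h1 := Finset.sum_le_sum (fun i (_ : i ∈ Finset.univ) => hdiss i t ht)
    have h2 : ∑ i, ρ * V i t ≤ ∑ i, (2 * α i - (outDeg E i : ℝ) * π i) * V i t :=
      Finset.sum_le_sum fun i _ =>
        mul_le_mul_of_nonneg_right (hρle i) (hVnonneg i t ht)
    simp only [Finset.sum_add_distrib, key t, Finset.mul_sum, sub_mul] at h1 h2 ⊢
    rw [Finset.sum_sub_distrib] at h2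
    have e1 : ∑ i, (outDeg E i : ℝ) * π i * V i t
        = ∑ i, (outDeg E i : ℝ) * (π i * V i t) := by
      refine Finset.sum_congr rfl fun i _ => by ring
    rw [e1] at h2
    linarith
  refine ⟨hρpos, fun T hT => ?_⟩
  have hTle : (0:ℝ) ≤ T := hT.le
  have huIcc : Set.uIcc (0:ℝ) T = Set.Icc 0 T := Set.uIcc_of_le hTle
  have hsub : Set.uIcc (0:ℝ) T ⊆ Set.Ici 0 := by
    rw [huIcc]; exact Set.Icc_subset_Ici_self
  -- integrability
  have hintW : IntervalIntegrable (fun t => ∑ i, w i t) MeasureTheory.volume 0 T := by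
    apply ContinuousOn.intervalIntegrable
    exact continuousOn_finset_sum _ fun i _ => (hw i).mono hsub
  have hintG : IntervalIntegrable (fun t => ∑ i, (g i t + ρ * V i t))
      MeasureTheory.volume 0 T := by
    apply ContinuousOn.intervalIntegrable
    exact continuousOn_finset_sum _ fun i _ =>
      ((hg i).mono hsub).add (continuous_const.mul (hVcont i)).continuousOn
  have hintD : IntervalIntegrable (fun t => ∑ i, deriv (V i) t)
      MeasureTheory.volume 0 T :=
    (continuous_finset_sum _ fun i _ => hDcont i).intervalIntegrable 0 T
  have hintR : IntervalIntegrable (fun t => -(∑ i, deriv (V i) t) + γ ^ 2 * ∑ i, w i t)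
      MeasureTheory.volume 0 T :=
    hintD.neg.add (hintW.const_mul _)
  have hmono : (∫ t in (0:ℝ)..T, ∑ i, (g i t + ρ * V i t)) ≤
      ∫ t in (0:ℝ)..T, (-(∑ i, deriv (V i) t) + γ ^ 2 * ∑ i, w i t) := by
    apply intervalIntegral.integral_mono_on hTle hintG hintR
    intro t ht
    exact hpt t ht.1
  have hFTC : (∫ t in (0:ℝ)..T, ∑ i, deriv (V i) t) = F T - F 0 := by
    have : (∫ t in (0:ℝ)..T, deriv F t) = F T - F 0 := by
      apply intervalIntegral.integral_deriv_eq_sub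
      · intro x _; exact Differentiable.differentiableAt (by
          rw [hF]
          exact Differentiable.fun_sum fun i _ => hVdiff i)
      · apply Continuous.intervalIntegrable
        have : deriv F = fun t => ∑ i, deriv (V i) t := funext hFderiv
        rw [this]
        exact continuous_finset_sum _ fun i _ => hDcont i
    rw [← this]
    exact intervalIntegral.integral_congr fun t _ => (hFderiv t).symm
  have hsplit : (∫ t in (0:ℝ)..T, (-(∑ i, deriv (V i) t) + γ ^ 2 * ∑ i, w i t))
      = -(F T - F 0) + γ ^ 2 * ∫ t in (0:ℝ)..T, ∑ i, w i t := by
    have e : (∫ t in (0:ℝ)..T, (-(∑ i, deriv (V i) t) + γ ^ 2 * ∑ i, w i t))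
        = ∫ t in (0:ℝ)..T, ((γ ^ 2 * ∑ i, w i t) - ∑ i, deriv (V i) t) :=
      intervalIntegral.integral_congr fun t _ => by ring
    rw [e, intervalIntegral.integral_sub (hintW.const_mul _) hintD, hFTC,
      intervalIntegral.integral_const_mul]
    ring
  have hFT : 0 ≤ F T := Finset.sum_nonneg fun i _ => hVnonneg i T hTle
  calc (∫ t in (0:ℝ)..T, ∑ i, (g i t + ρ * V i t))
      ≤ -(F T - F 0) + γ ^ 2 * ∫ t in (0:ℝ)..T, ∑ i, w i t := by
        rw [← hsplit]; exact hmono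
    _ ≤ F 0 + γ ^ 2 * ∫ t in (0:ℝ)..T, ∑ i, w i t := by linarith
    _ = (∑ i, V i 0) + γ ^ 2 * ∫ t in (0:ℝ)..T, ∑ i, w i t := rfl
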